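/- Let G be a uv-straight graph and let (W1,W2) be a pair of wings for a quadruple (a,b,c,d) of vertices of G. Then for every monotone uc-path S of G containing W1 as a subpath and every monotone bv-path T of G containing W2 as a subpath, S minus c is anticomplete to T in G and S is anticomplete to T minus b in G. -/

import Mathlib

open SimpleGraph

variable {V : Type*}

/-- A walk is monotone if its vertices have pairwise distinct heights. -/
def MonoWalk (G : SimpleGraph V) (u : V) {x y : V} (W : G.Walk x y) : Prop :=
  (W.support.map (fun z => G.dist u z)).Nodup

/-- `P` is a shortest `x`-`y` path of `G`. -/
def IsShortestPath (G : SimpleGraph V) {x y : V} (P : G.Walk x y) : Prop :=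
  P.IsPath ∧ P.length = G.dist x y

/-- `P` is an induced path of `G`: a path that equals the subgraph of `G`
induced by its vertex set. -/
def IsInducedPath (G : SimpleGraph V) {x y : V} (P : G.Walk x y) : Prop :=
  P.IsPath ∧ ∀ a b : V, a ∈ P.support → b ∈ P.support → G.Adj a b → P.toSubgraph.Adj a b

/-- A `uv`-trail of `G`: an induced `uv`-path of `G` that is not a shortest
`uv`-path of `G`. -/
def IsTrailPath (G : SimpleGraph V) (u v : V) (P : G.Walk u v) : Prop :=
  IsInducedPath G P ∧ ¬ IsShortestPath G P

/-- A shortest `uv`-trail of `G`: a `uv`-trail of minimum number of edges. -/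
def IsShortestTrail (G : SimpleGraph V) (u v : V) (P : G.Walk u v) : Prop :=
  IsTrailPath G u v P ∧ ∀ Q : G.Walk u v, IsTrailPath G u v Q → P.length ≤ Q.length

/-- `G` is `uv`-straight: every vertex lies on a shortest `uv`-path of `G`. -/
def Straight (G : SimpleGraph V) (u v : V) : Prop :=
  ∀ x : V, ∃ P : G.Walk u v, IsShortestPath G P ∧ x ∈ P.support

/-- Vertex sets `X` and `Y` are anticomplete in `G`: they are disjoint and there
is no edge of `G` between them. -/
def Anticomplete (G : SimpleGraph V) (X Y : Set V) : Prop :=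
  ∀ x ∈ X, ∀ y ∈ Y, x ≠ y ∧ ¬ G.Adj x y

/-- `x` and `y` are connected in the subgraph of `G` induced by `A`. -/
def ConnIn (G : SimpleGraph V) (A : Set V) (x y : V) : Prop :=
  ∃ W : G.Walk x y, ∀ z ∈ W.support, z ∈ A

/-- The closed neighborhood `N_G[A]` of a vertex set `A`. -/
def closedNbhd (G : SimpleGraph V) (A : Set V) : Set V :=
  {y | y ∈ A ∨ ∃ x ∈ A, G.Adj x y}

/-- `(s, t)` is the twist pair of the `uv`-path `P`: `P[u,s]` is the maximal
monotone prefix of `P` and `P[t,v]` is the maximal monotone suffix of `P`. -/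
def IsTwistPair [DecidableEq V] (G : SimpleGraph V) (u v : V) (P : G.Walk u v)
    (s t : V) : Prop :=
  ∃ (hs : s ∈ P.support) (ht : t ∈ P.support),
    MonoWalk G u (P.takeUntil s hs) ∧ MonoWalk G u (P.dropUntil t ht) ∧
    (∀ (s' : V) (hs' : s' ∈ P.support), MonoWalk G u (P.takeUntil s' hs') →
      (P.takeUntil s' hs').length ≤ (P.takeUntil s hs).length) ∧
    (∀ (t' : V) (ht' : t' ∈ P.support), MonoWalk G u (P.dropUntil t' ht') →
      (P.dropUntil t' ht').length ≤ (P.dropUntil t ht).length)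

/-- `(W1, W2)` is a pair of wings for the quadruple `(a, b, c, d)` in `G`
(with respect to heights measured from `u`): `W1` is a monotone `c`-`a*`-path
containing `a`, `W2` is a monotone `b`-`d*`-path containing `d`,
`h(a*) + 1 = h(a) = h(b) ≤ h(c) = h(d) = h(d*) - 1`, `W1 - c` is anticomplete
to `W2`, and `W1` is anticomplete to `W2 - b`. -/
def IsWingPair (G : SimpleGraph V) (u : V) (a b c d : V) {astar dstar : V}
    (W1 : G.Walk c astar) (W2 : G.Walk b dstar) : Prop :=
  W1.IsPath ∧ W2.IsPath ∧ MonoWalk G u W1 ∧ MonoWalk G u W2 ∧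
  a ∈ W1.support ∧ d ∈ W2.support ∧
  G.dist u astar + 1 = G.dist u a ∧ G.dist u a = G.dist u b ∧
  G.dist u b ≤ G.dist u c ∧ G.dist u c = G.dist u d ∧
  G.dist u d + 1 = G.dist u dstar ∧
  Anticomplete G {x | x ∈ W1.support ∧ x ≠ c} {x | x ∈ W2.support} ∧
  Anticomplete G {x | x ∈ W1.support} {x | x ∈ W2.support ∧ x ≠ b}

/-- The quadruple `(a, b, c, d)` is winged in `G`. -/
def Winged (G : SimpleGraph V) (u : V) (a b c d : V) : Prop :=
  ∃ (astar dstar : V) (W1 : G.Walk c astar) (W2 : G.Walk b dstar),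
    IsWingPair G u a b c d W1 W2

/-- The quadruple `(a, b, c, d)` admits a pair of wings `(W1, W2)` in `G` with
`W1` anticomplete to `W2`. -/
def WingedAnti (G : SimpleGraph V) (u : V) (a b c d : V) : Prop :=
  ∃ (astar dstar : V) (W1 : G.Walk c astar) (W2 : G.Walk b dstar),
    IsWingPair G u a b c d W1 W2 ∧
    Anticomplete G {x | x ∈ W1.support} {x | x ∈ W2.support}

/-- For a `uv`-trail `P` of a `uv`-straight graph `G` with twist pair `(s, t)`,
a monotone `uc`-path `S` of `G` with `h(c) = h(s)` is a sidetrack for `P` if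
(S1) `G` contains a monotone `tv`-path `T` with `S - c` anticomplete to `T` and
`S` anticomplete to `T - t`, and (S2) `S` contains the vertex `a` of `P[u,s]`
with `h(a) = h(t)`. -/
def IsSidetrack [DecidableEq V] (G : SimpleGraph V) (u v : V) (P : G.Walk u v)
    (s t : V) {c : V} (S : G.Walk u c) : Prop :=
  S.IsPath ∧ MonoWalk G u S ∧ G.dist u c = G.dist u s ∧
  (∃ (T : G.Walk t v), T.IsPath ∧ MonoWalk G u T ∧
    Anticomplete G {x | x ∈ S.support ∧ x ≠ c} {x | x ∈ T.support} ∧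
    Anticomplete G {x | x ∈ S.support} {x | x ∈ T.support ∧ x ≠ t}) ∧
  (∀ (hs : s ∈ P.support) (a : V),
    a ∈ (P.takeUntil s hs).support → G.dist u a = G.dist u t → a ∈ S.support)


section Aux

variable {V : Type*}

private lemma mono_range (G : SimpleGraph V) (u : V)
    (hstep : ∀ x y : V, G.Adj x y → G.dist u y ≤ G.dist u x + 1)
    {p q : V} (W : G.Walk p q) :
    MonoWalk G u W →
    (W.support.map (fun z => G.dist u z) = List.range' (G.dist u p) (W.length + 1) ∧
      G.dist u q = G.dist u p + W.length) ∨
    (W.support.map (fun z => G.dist u z) =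
        (List.range' (G.dist u q) (W.length + 1)).reverse ∧
      G.dist u p = G.dist u q + W.length) := by
  induction W with
  | nil =>
    intro _
    left
    refine ⟨?_, by simp⟩
    simp [List.range'_succ]
  | @cons x y z hadj W' ih =>
    intro hW
    unfold MonoWalk at hW
    rw [SimpleGraph.Walk.support_cons, List.map_cons, List.nodup_cons] at hW
    obtain ⟨hnm, hnd⟩ := hW
    have hymem : G.dist u y ∈ W'.support.map (fun z => G.dist u z) :=
      List.mem_map_of_mem W'.start_mem_support
    have hxy : G.dist u y ≤ G.dist u x + 1 := hstep x y hadj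
    have hyx : G.dist u x ≤ G.dist u y + 1 := hstep y x hadj.symm
    have hne : G.dist u x ≠ G.dist u y := fun h => hnm (h ▸ hymem)
    rw [SimpleGraph.Walk.support_cons, List.map_cons, SimpleGraph.Walk.length_cons]
    rcases ih hnd with ⟨hmap, hlen⟩ | ⟨hmap, hlen⟩
    · rcases (by omega : G.dist u y = G.dist u x + 1 ∨ G.dist u x = G.dist u y + 1) with
        hd | hd
      · left
        refine ⟨?_, by omega⟩
        rw [hmap, hd]
        exact List.range'_succ.symm
      · by_cases hL : W'.length = 0
        · right
          refine ⟨?_, by omega⟩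
          rw [hmap, hL]
          simp only [List.range'_succ, List.range'_zero, List.reverse_cons,
            List.reverse_nil, List.nil_append, List.cons_append, List.cons.injEq,
            List.singleton_append, and_true, true_and]
          omega
        · exfalso
          apply hnm
          rw [hmap, List.mem_range']
          exact ⟨1, by omega, by omega⟩
    · rcases (by omega : G.dist u y = G.dist u x + 1 ∨ G.dist u x = G.dist u y + 1) with
        hd | hd
      · by_cases hL : W'.length = 0
        · left
          refine ⟨?_, by omega⟩
          rw [hmap, hL]
          simp only [List.range'_succ, List.range'_zero, List.reverse_cons,
            List.reverse_nil, List.nil_append, List.cons_append, List.cons.injEq,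
            List.singleton_append, and_true, true_and]
          omega
        · exfalso
          apply hnm
          rw [hmap, List.mem_reverse, List.mem_range']
          exact ⟨W'.length - 1, by omega, by omega⟩
      · right
        refine ⟨?_, by omega⟩
        rw [hmap]
        conv_rhs => rw [List.range'_1_concat, List.reverse_append]
        simp only [List.reverse_cons, List.reverse_nil, List.nil_append,
          List.singleton_append, List.cons.injEq, and_true, true_and]
        omega

private lemma mono_bounds (G : SimpleGraph V) (u : V)
    (hstep : ∀ x y : V, G.Adj x y → G.dist u y ≤ G.dist u x + 1)
    {p q : V} (W : G.Walk p q) (hW : MonoWalk G u W)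
    (hpq : G.dist u p ≤ G.dist u q) :
    ∀ x ∈ W.support, G.dist u p ≤ G.dist u x ∧ G.dist u x ≤ G.dist u q := by
  intro x hx
  have hfx : G.dist u x ∈ W.support.map (fun z => G.dist u z) :=
    List.mem_map_of_mem hx
  rcases mono_range G u hstep W hW with ⟨hmap, hlen⟩ | ⟨hmap, hlen⟩
  · rw [hmap] at hfx
    obtain ⟨i, hi, he⟩ := List.mem_range'.mp hfx
    omega
  · rw [hmap, List.mem_reverse] at hfx
    obtain ⟨i, hi, he⟩ := List.mem_range'.mp hfx
    omega

end Aux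

/-- Let `(W1, W2)` be a pair of wings for a quadruple
`(a, b, c, d)` of a `uv`-straight graph `G`. Then for every monotone `uc`-path
`S` of `G` containing `W1` as a subpath and every monotone `bv`-path `T` of `G`
containing `W2` as a subpath, `S - c` is anticomplete to `T` in `G` and `S` is
anticomplete to `T - b` in `G`. -/
theorem statement6 [Fintype V] [DecidableEq V] (G : SimpleGraph V) (u v : V)
    (hstraight : Straight G u v)
    (a b c d astar dstar : V)
    (W1 : G.Walk c astar) (W2 : G.Walk b dstar)
    (hwings : IsWingPair G u a b c d W1 W2)
    (S : G.Walk u c) (hSpath : S.IsPath) (hSmono : MonoWalk G u S)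
    (hSsub : ∃ S0 : G.Walk u astar, S = S0.append W1.reverse)
    (T : G.Walk b v) (hTpath : T.IsPath) (hTmono : MonoWalk G u T)
    (hTsub : ∃ T0 : G.Walk dstar v, T = W2.append T0) :
    Anticomplete G {x | x ∈ S.support ∧ x ≠ c} {x | x ∈ T.support} ∧
    Anticomplete G {x | x ∈ S.support} {x | x ∈ T.support ∧ x ≠ b} := by
  classical
  obtain ⟨hW1p, hW2p, hW1m, hW2m, haW1, hdW2, hha, hhab, hhbc, hhcd, hhd, anti1, anti2⟩ :=
    hwings
  obtain ⟨S0, rfl⟩ := hSsub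
  obtain ⟨T0, rfl⟩ := hTsub
  have hreach : ∀ x : V, G.Reachable u x := by
    intro x
    obtain ⟨P, hP, hxP⟩ := hstraight x
    exact ⟨P.takeUntil x hxP⟩
  have hstep : ∀ x y : V, G.Adj x y → G.dist u y ≤ G.dist u x + 1 := by
    intro x y hxy
    obtain ⟨p, hp⟩ := (hreach x).exists_walk_length_eq_dist
    have h := SimpleGraph.dist_le (p.concat hxy)
    rwa [SimpleGraph.Walk.length_concat, hp] at h
  have hle_v : ∀ x : V, G.dist u x ≤ G.dist u v := by
    intro x
    obtain ⟨P, hP, hxP⟩ := hstraight x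
    have h1 : G.dist u x ≤ (P.takeUntil x hxP).length := SimpleGraph.dist_le _
    have h2 := SimpleGraph.Walk.length_takeUntil_le P hxP
    have h3 := hP.2
    omega
  -- monotonicity of the pieces
  have hS0m : MonoWalk G u S0 := by
    have h := hSmono
    unfold MonoWalk at h ⊢
    rw [SimpleGraph.Walk.support_append, List.map_append] at h
    exact h.of_append_left
  have hTm' := hTmono
  unfold MonoWalk at hTm'
  rw [SimpleGraph.Walk.support_append, List.map_append] at hTm'
  have hdisjT := List.disjoint_of_nodup_append hTm'
  have hT0m : MonoWalk G u T0 := by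
    unfold MonoWalk
    rw [T0.support_eq_cons, List.map_cons, List.nodup_cons]
    refine ⟨?_, hTm'.of_append_right⟩
    intro hmem
    exact hdisjT (List.mem_map_of_mem W2.end_mem_support) hmem
  -- bounds
  have hu0 : G.dist u u = 0 := SimpleGraph.dist_self
  have hS_ub : ∀ x ∈ (S0.append W1.reverse).support, G.dist u x ≤ G.dist u c := by
    intro x hx
    exact (mono_bounds G u hstep _ hSmono (by omega) x hx).2
  have hS0_ub : ∀ x ∈ S0.support, G.dist u x ≤ G.dist u astar := by
    intro x hx
    exact (mono_bounds G u hstep _ hS0m (by omega) x hx).2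
  have hT_lb : ∀ y ∈ (W2.append T0).support, G.dist u b ≤ G.dist u y := by
    intro y hy
    exact (mono_bounds G u hstep _ hTmono (hle_v b) y hy).1
  have hT0_lb : ∀ y ∈ T0.support, G.dist u dstar ≤ G.dist u y := by
    intro y hy
    exact (mono_bounds G u hstep _ hT0m (hle_v dstar) y hy).1
  -- injectivity of heights on S
  have hSinj : ∀ ⦃x : V⦄, x ∈ (S0.append W1.reverse).support → ∀ ⦃y : V⦄,
      y ∈ (S0.append W1.reverse).support → G.dist u x = G.dist u y → x = y :=
    List.inj_on_of_nodup_map hSmono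
  have hTinj : ∀ ⦃x : V⦄, x ∈ (W2.append T0).support → ∀ ⦃y : V⦄,
      y ∈ (W2.append T0).support → G.dist u x = G.dist u y → x = y :=
    List.inj_on_of_nodup_map hTmono
  have hastar_S : astar ∈ (S0.append W1.reverse).support := by
    rw [SimpleGraph.Walk.support_append]
    exact List.mem_append.mpr (Or.inl S0.end_mem_support)
  have hdstar_T : dstar ∈ (W2.append T0).support := by
    rw [SimpleGraph.Walk.support_append]
    exact List.mem_append.mpr (Or.inl W2.end_mem_support)
  -- membership transfer
  have hxW1 : ∀ x ∈ (S0.append W1.reverse).support,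
      G.dist u astar ≤ G.dist u x → x ∈ W1.support := by
    intro x hxS hge
    have hxS' := hxS
    rw [SimpleGraph.Walk.support_append] at hxS'
    rcases List.mem_append.mp hxS' with hx0 | hxt
    · have heq : G.dist u x = G.dist u astar := le_antisymm (hS0_ub x hx0) hge
      have : x = astar := hSinj hxS hastar_S heq
      rw [this]
      exact W1.end_mem_support
    · have : x ∈ W1.reverse.support := List.mem_of_mem_tail hxt
      rwa [SimpleGraph.Walk.support_reverse, List.mem_reverse] at this
  have hyW2 : ∀ y ∈ (W2.append T0).support,
      G.dist u y ≤ G.dist u dstar → y ∈ W2.support := by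
    intro y hyT hle
    have hyT' := hyT
    rw [SimpleGraph.Walk.support_append] at hyT'
    rcases List.mem_append.mp hyT' with hy0 | hyt
    · exact hy0
    · have hy0 : y ∈ T0.support := List.mem_of_mem_tail hyt
      have heq : G.dist u y = G.dist u dstar := le_antisymm hle (hT0_lb y hy0)
      have : y = dstar := hTinj hyT hdstar_T heq
      rw [this]
      exact W2.end_mem_support
  constructor
  · rintro x ⟨hxS, hxc⟩ y hyT
    have hxub : G.dist u x ≤ G.dist u c := hS_ub x hxS
    have hylb : G.dist u b ≤ G.dist u y := hT_lb y hyT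
    constructor
    · rintro rfl
      have hx1 : x ∈ W1.support := hxW1 x hxS (by omega)
      have hy2 : x ∈ W2.support := hyW2 x hyT (by omega)
      exact (anti1 x ⟨hx1, hxc⟩ x hy2).1 rfl
    · intro hadj
      have h1 : G.dist u y ≤ G.dist u x + 1 := hstep x y hadj
      have h2 : G.dist u x ≤ G.dist u y + 1 := hstep y x hadj.symm
      have hx1 : x ∈ W1.support := hxW1 x hxS (by omega)
      have hy2 : y ∈ W2.support := hyW2 y hyT (by omega)
      exact (anti1 x ⟨hx1, hxc⟩ y hy2).2 hadj
  · rintro x hxS y ⟨hyT, hyb⟩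
    have hxub : G.dist u x ≤ G.dist u c := hS_ub x hxS
    have hylb : G.dist u b ≤ G.dist u y := hT_lb y hyT
    constructor
    · rintro rfl
      have hx1 : x ∈ W1.support := hxW1 x hxS (by omega)
      have hy2 : x ∈ W2.support := hyW2 x hyT (by omega)
      exact (anti2 x hx1 x ⟨hy2, hyb⟩).1 rfl
    · intro hadj
      have h1 : G.dist u y ≤ G.dist u x + 1 := hstep x y hadj
      have h2 : G.dist u x ≤ G.dist u y + 1 := hstep y x hadj.symm
      have hx1 : x ∈ W1.support := hxW1 x hxS (by omega)
      have hy2 : y ∈ W2.support := hyW2 y hyT (by omega)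
      exact (anti2 x hx1 y ⟨hy2, hyb⟩).2 hadj
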